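/- Let n = 9 and let J = {128,129,130,131} ∪ {188,189,190,191} ∪ {220,221,222,223} ∪ {231} ∪ {235,236,…,255}. For every j with 128 ≤ j ≤ 255 and j ∉ J, the conjugate pair (ε_{255−j}, ε_j) is a twin: for every a ∈ Q, min(|ε_{255−j} a|, |ε_j a|) ≤ ‖a‖. -/

import Mathlib

set_option maxRecDepth 10000

/-- The sign vector `ε_i ∈ {+1,-1}^9`: the `m`-th coordinate (zero-based `m`)
is `+1` iff the binary digit of `i` at position `8 - m` is `0`. -/
def eps (i : ℕ) : Fin 9 → ℝ := fun m => if Nat.testBit i (8 - (m : ℕ)) then -1 else 1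

/-- The cone `Q = {a : a₁ ≥ a₂ ≥ ⋯ ≥ a₉ ≥ 0}`. -/
def inQ (a : Fin 9 → ℝ) : Prop :=
  (∀ i j : Fin 9, i ≤ j → a j ≤ a i) ∧ ∀ i, 0 ≤ a i

def epsZ (k p : ℕ) : ℤ := if Nat.testBit k (8 - p) then -1 else 1


lemma sum9 (f : Fin 9 → ℝ) : ∑ i, f i = f 0 + f 1 + f 2 + f 3 + f 4 + f 5 + f 6 + f 7 + f 8 := by
  show (Finset.univ : Finset (Fin 9)).sum f = _
  rw [show (Finset.univ : Finset (Fin 9)) = {0,1,2,3,4,5,6,7,8} from by decide]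
  simp [Finset.sum_insert, Finset.mem_insert]; ring

def certDL : List ℤ := [1, 1, 1, 1, 1, 1, 1, 1, 1, 1, 1, 1, 1, 1, 1, 1, 1, 1, 1, 1, 1, 2, 2, 2, 1, 2, 2, 2, 2, 2, 2, 2, 1, 1, 1, 1, 3, 3, 3, 3, 3, 15, 3, 3, 3, 3, 3, 3, 3, 15, 3, 3, 3, 3, 3, 3, 3, 3, 3, 3, 3, 3, 3, 3, 1, 1, 1, 1, 3, 3, 3, 3, 3, 4, 5, 5, 5, 5, 5, 5, 3, 4, 7, 7, 9, 1, 1, 1, 9, 1, 1, 1, 1, 1, 1, 1, 3, 4, 7, 7, 9, 1, 1, 1, 9, 1, 1, 1, 1, 1, 1, 1, 9, 1, 1, 1, 1, 1, 1, 1, 1, 1, 1, 1, 1, 1, 1, 1, 1, 1, 1, 1, 3, 3, 3, 3, 3, 4, 5, 5, 5, 5, 5, 5, 3, 4, 7, 7, 9, 1, 1, 1, 9, 1, 1, 1, 1, 1, 1, 1, 3, 4, 7, 7, 9, 1, 1, 1, 9, 1, 1, 1, 1, 1, 1, 1, 9, 1, 1, 1, 1, 1, 1, 1, 1, 1, 1,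 1, 1, 1, 1, 1, 3, 4, 7, 7, 9, 1, 1, 1, 9, 1, 1, 1, 1, 1, 1, 1, 9, 1, 1, 1, 1, 1, 1, 1, 1, 1, 1, 1, 1, 1, 1, 1, 9, 1, 1, 1, 1, 1, 1, 1, 1, 1, 1, 1, 1, 1, 1, 1, 1, 1, 1, 1, 1, 1, 1, 1, 1, 1, 1, 1, 1, 1, 1, 1]

def certNL : List (List ℤ) := [
[0, 0, 0, 0, 0, 0, 0, 0, 0],
[0, 0, 0, 0, 0, 0, 0, 0, 0],
[0, 0, 0, 0, 0, 0, 0, 0, 0],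
[0, 0, 0, 0, 0, 0, 0, 0, 0],
[0, 0, 0, 0, 0, 0, 0, 0, 0],
[0, 0, 0, 0, 0, 0, 0, 0, 0],
[0, 0, 0, 0, 0, 0, 0, 0, 0],
[0, 0, 0, 0, 0, 0, 0, 0, 0],
[0, 0, 0, 0, 0, 0, 0, 0, 0],
[0, 0, 0, 0, 0, 0, 0, 0, 0],
[0, 0, 0, 0, 0, 0, 0, 0, 0],
[0, 0, 0, 0, 0, 0, 0, 0, 0],
[0, 0, 0, 0, 0, 0, 0, 0, 0],
[0, 0, 0, 0, 0, 0, 0, 0, 0],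
[0, 0, 0, 0, 0, 0, 0, 0, 0],
[0, 0, 0, 0, 0, 0, 0, 0, 0],
[0, 0, 0, 0, 0, 0, 0, 0, 0],
[0, 0, 0, 0, 0, 0, 0, 0, 0],
[0, 0, 0, 0, 0, 0, 0, 0, 0],
[0, 0, 0, 0, 0, 0, 0, 0, 0],
[0, 0, 0, 0, 0, 0, 0, 0, 0],
[1, 1, 1, 1, 0, 0, 0, 0, 0],
[1, 1, 1, 1, 0, 0, 0, 0, 0],
[1, 1, 1, 1, 0, 0, 0, 0, 0],
[0, 0, 0, 0, 0, 0, 0, 0, 0],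
[1, 1, 1, 1, 0, 0, 0, 0, 0],
[1, 1, 1, 1, 0, 0, 0, 0, 0],
[1, 1, 1, 1, 0, 0, 0, 0, 0],
[1, 1, 1, 1, 0, 0, 0, 0, 0],
[1, 1, 1, 1, 0, 0, 0, 0, 0],
[1, 1, 1, 1, 0, 0, 0, 0, 0],
[1, 1, 1, 1, 0, 0, 0, 0, 0],
[0, 0, 0, 0, 0, 0, 0, 0, 0],
[0, 0, 0, 0, 0, 0, 0, 0, 0],
[0, 0, 0, 0, 0, 0, 0, 0, 0],
[0, 0, 0, 0, 0, 0, 0, 0, 0],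
[1, 1, 1, 1, 1, 1, 1, 1, 1],
[1, 1, 1, 1, 1, 1, 0, 0, 0],
[1, 1, 1, 1, 1, 1, 0, 0, 0],
[1, 1, 1, 1, 1, 1, 0, 0, 0],
[1, 1, 1, 1, 1, 1, 1, 1, 1],
[5, 5, 5, 3, 3, 3, 3, 3, 0],
[1, 1, 1, 0, 0, 0, 0, 0, 0],
[1, 1, 1, 0, 0, 0, 0, 0, 0],
[1, 1, 1, 0, 0, 0, 0, 0, 0],
[1, 1, 1, 0, 0, 0, 0, 0, 0],
[1, 1, 1, 0, 0, 0, 0, 0, 0],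
[1, 1, 1, 0, 0, 0, 0, 0, 0],
[1, 1, 1, 1, 1, 1, 1, 1, 1],
[5, 5, 5, 3, 3, 3, 3, 3, 0],
[1, 1, 1, 0, 0, 0, 0, 0, 0],
[1, 1, 1, 0, 0, 0, 0, 0, 0],
[1, 1, 1, 0, 0, 0, 0, 0, 0],
[1, 1, 1, 0, 0, 0, 0, 0, 0],
[1, 1, 1, 0, 0, 0, 0, 0, 0],
[1, 1, 1, 0, 0, 0, 0, 0, 0],
[1, 1, 1, 0, 0, 0, 0, 0, 0],
[1, 1, 1, 0, 0, 0, 0, 0, 0],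
[1, 1, 1, 0, 0, 0, 0, 0, 0],
[1, 1, 1, 0, 0, 0, 0, 0, 0],
[1, 1, 1, 0, 0, 0, 0, 0, 0],
[1, 1, 1, 0, 0, 0, 0, 0, 0],
[1, 1, 1, 0, 0, 0, 0, 0, 0],
[1, 1, 1, 0, 0, 0, 0, 0, 0],
[0, 0, 0, 0, 0, 0, 0, 0, 0],
[0, 0, 0, 0, 0, 0, 0, 0, 0],
[0, 0, 0, 0, 0, 0, 0, 0, 0],
[0, 0, 0, 0, 0, 0, 0, 0, 0],
[1, 1, 1, 1, 1, 1, 1, 1, 1],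
[1, 1, 1, 1, 1, 1, 0, 0, 0],
[1, 1, 1, 1, 1, 1, 0, 0, 0],
[1, 1, 1, 1, 1, 1, 0, 0, 0],
[1, 1, 1, 1, 1, 1, 1, 1, 1],
[1, 1, 1, 1, 1, 1, 1, 1, 0],
[1, 1, 1, 1, 1, 0, 0, 0, 0],
[1, 1, 1, 1, 1, 0, 0, 0, 0],
[1, 1, 1, 1, 1, 0, 0, 0, 0],
[1, 1, 1, 1, 1, 0, 0, 0, 0],
[1, 1, 1, 1, 1, 0, 0, 0, 0],
[1, 1, 1, 1, 1, 0, 0, 0, 0],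
[1, 1, 1, 1, 1, 1, 1, 1, 1],
[1, 1, 1, 1, 1, 1, 1, 1, 0],
[1, 1, 1, 1, 1, 1, 1, 0, 0],
[1, 1, 1, 1, 1, 1, 1, 0, 0],
[1, 1, 1, 1, 1, 1, 1, 1, 1],
[0, 0, 0, 0, 0, 0, 0, 0, 0],
[0, 0, 0, 0, 0, 0, 0, 0, 0],
[0, 0, 0, 0, 0, 0, 0, 0, 0],
[1, 1, 1, 1, 1, 1, 1, 1, 1],
[0, 0, 0, 0, 0, 0, 0, 0, 0],
[0, 0, 0, 0, 0, 0, 0, 0, 0],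
[0, 0, 0, 0, 0, 0, 0, 0, 0],
[0, 0, 0, 0, 0, 0, 0, 0, 0],
[0, 0, 0, 0, 0, 0, 0, 0, 0],
[0, 0, 0, 0, 0, 0, 0, 0, 0],
[0, 0, 0, 0, 0, 0, 0, 0, 0],
[1, 1, 1, 1, 1, 1, 1, 1, 1],
[1, 1, 1, 1, 1, 1, 1, 1, 0],
[1, 1, 1, 1, 1, 1, 1, 0, 0],
[1, 1, 1, 1, 1, 1, 1, 0, 0],
[1, 1, 1, 1, 1, 1, 1, 1, 1],
[0, 0, 0, 0, 0, 0, 0, 0, 0],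
[0, 0, 0, 0, 0, 0, 0, 0, 0],
[0, 0, 0, 0, 0, 0, 0, 0, 0],
[1, 1, 1, 1, 1, 1, 1, 1, 1],
[0, 0, 0, 0, 0, 0, 0, 0, 0],
[0, 0, 0, 0, 0, 0, 0, 0, 0],
[0, 0, 0, 0, 0, 0, 0, 0, 0],
[0, 0, 0, 0, 0, 0, 0, 0, 0],
[0, 0, 0, 0, 0, 0, 0, 0, 0],
[0, 0, 0, 0, 0, 0, 0, 0, 0],
[0, 0, 0, 0, 0, 0, 0, 0, 0],
[1, 1, 1, 1, 1, 1, 1, 1, 1],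
[0, 0, 0, 0, 0, 0, 0, 0, 0],
[0, 0, 0, 0, 0, 0, 0, 0, 0],
[0, 0, 0, 0, 0, 0, 0, 0, 0],
[0, 0, 0, 0, 0, 0, 0, 0, 0],
[0, 0, 0, 0, 0, 0, 0, 0, 0],
[0, 0, 0, 0, 0, 0, 0, 0, 0],
[0, 0, 0, 0, 0, 0, 0, 0, 0],
[0, 0, 0, 0, 0, 0, 0, 0, 0],
[0, 0, 0, 0, 0, 0, 0, 0, 0],
[0, 0, 0, 0, 0, 0, 0, 0, 0],
[0, 0, 0, 0, 0, 0, 0, 0, 0],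
[0, 0, 0, 0, 0, 0, 0, 0, 0],
[0, 0, 0, 0, 0, 0, 0, 0, 0],
[0, 0, 0, 0, 0, 0, 0, 0, 0],
[0, 0, 0, 0, 0, 0, 0, 0, 0],
[0, 0, 0, 0, 0, 0, 0, 0, 0],
[0, 0, 0, 0, 0, 0, 0, 0, 0],
[0, 0, 0, 0, 0, 0, 0, 0, 0],
[0, 0, 0, 0, 0, 0, 0, 0, 0],
[1, 1, 1, 1, 1, 1, 1, 1, 1],
[1, 1, 1, 1, 1, 1, 0, 0, 0],
[1, 1, 1, 1, 1, 1, 0, 0, 0],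
[1, 1, 1, 1, 1, 1, 0, 0, 0],
[1, 1, 1, 1, 1, 1, 1, 1, 1],
[1, 1, 1, 1, 1, 1, 1, 1, 0],
[1, 1, 1, 1, 1, 0, 0, 0, 0],
[1, 1, 1, 1, 1, 0, 0, 0, 0],
[1, 1, 1, 1, 1, 0, 0, 0, 0],
[1, 1, 1, 1, 1, 0, 0, 0, 0],
[1, 1, 1, 1, 1, 0, 0, 0, 0],
[1, 1, 1, 1, 1, 0, 0, 0, 0],
[1, 1, 1, 1, 1, 1, 1, 1, 1],
[1, 1, 1, 1, 1, 1, 1, 1, 0],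
[1, 1, 1, 1, 1, 1, 1, 0, 0],
[1, 1, 1, 1, 1, 1, 1, 0, 0],
[1, 1, 1, 1, 1, 1, 1, 1, 1],
[0, 0, 0, 0, 0, 0, 0, 0, 0],
[0, 0, 0, 0, 0, 0, 0, 0, 0],
[0, 0, 0, 0, 0, 0, 0, 0, 0],
[1, 1, 1, 1, 1, 1, 1, 1, 1],
[0, 0, 0, 0, 0, 0, 0, 0, 0],
[0, 0, 0, 0, 0, 0, 0, 0, 0],
[0, 0, 0, 0, 0, 0, 0, 0, 0],
[0, 0, 0, 0, 0, 0, 0, 0, 0],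
[0, 0, 0, 0, 0, 0, 0, 0, 0],
[0, 0, 0, 0, 0, 0, 0, 0, 0],
[0, 0, 0, 0, 0, 0, 0, 0, 0],
[1, 1, 1, 1, 1, 1, 1, 1, 1],
[1, 1, 1, 1, 1, 1, 1, 1, 0],
[1, 1, 1, 1, 1, 1, 1, 0, 0],
[1, 1, 1, 1, 1, 1, 1, 0, 0],
[1, 1, 1, 1, 1, 1, 1, 1, 1],
[0, 0, 0, 0, 0, 0, 0, 0, 0],
[0, 0, 0, 0, 0, 0, 0, 0, 0],
[0, 0, 0, 0, 0, 0, 0, 0, 0],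
[1, 1, 1, 1, 1, 1, 1, 1, 1],
[0, 0, 0, 0, 0, 0, 0, 0, 0],
[0, 0, 0, 0, 0, 0, 0, 0, 0],
[0, 0, 0, 0, 0, 0, 0, 0, 0],
[0, 0, 0, 0, 0, 0, 0, 0, 0],
[0, 0, 0, 0, 0, 0, 0, 0, 0],
[0, 0, 0, 0, 0, 0, 0, 0, 0],
[0, 0, 0, 0, 0, 0, 0, 0, 0],
[1, 1, 1, 1, 1, 1, 1, 1, 1],
[0, 0, 0, 0, 0, 0, 0, 0, 0],
[0, 0, 0, 0, 0, 0, 0, 0, 0],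
[0, 0, 0, 0, 0, 0, 0, 0, 0],
[0, 0, 0, 0, 0, 0, 0, 0, 0],
[0, 0, 0, 0, 0, 0, 0, 0, 0],
[0, 0, 0, 0, 0, 0, 0, 0, 0],
[0, 0, 0, 0, 0, 0, 0, 0, 0],
[0, 0, 0, 0, 0, 0, 0, 0, 0],
[0, 0, 0, 0, 0, 0, 0, 0, 0],
[0, 0, 0, 0, 0, 0, 0, 0, 0],
[0, 0, 0, 0, 0, 0, 0, 0, 0],
[0, 0, 0, 0, 0, 0, 0, 0, 0],
[0, 0, 0, 0, 0, 0, 0, 0, 0],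
[0, 0, 0, 0, 0, 0, 0, 0, 0],
[0, 0, 0, 0, 0, 0, 0, 0, 0],
[1, 1, 1, 1, 1, 1, 1, 1, 1],
[1, 1, 1, 1, 1, 1, 1, 1, 0],
[1, 1, 1, 1, 1, 1, 1, 0, 0],
[1, 1, 1, 1, 1, 1, 1, 0, 0],
[1, 1, 1, 1, 1, 1, 1, 1, 1],
[0, 0, 0, 0, 0, 0, 0, 0, 0],
[0, 0, 0, 0, 0, 0, 0, 0, 0],
[0, 0, 0, 0, 0, 0, 0, 0, 0],
[1, 1, 1, 1, 1, 1, 1, 1, 1],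
[0, 0, 0, 0, 0, 0, 0, 0, 0],
[0, 0, 0, 0, 0, 0, 0, 0, 0],
[0, 0, 0, 0, 0, 0, 0, 0, 0],
[0, 0, 0, 0, 0, 0, 0, 0, 0],
[0, 0, 0, 0, 0, 0, 0, 0, 0],
[0, 0, 0, 0, 0, 0, 0, 0, 0],
[0, 0, 0, 0, 0, 0, 0, 0, 0],
[1, 1, 1, 1, 1, 1, 1, 1, 1],
[0, 0, 0, 0, 0, 0, 0, 0, 0],
[0, 0, 0, 0, 0, 0, 0, 0, 0],
[0, 0, 0, 0, 0, 0, 0, 0, 0],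
[0, 0, 0, 0, 0, 0, 0, 0, 0],
[0, 0, 0, 0, 0, 0, 0, 0, 0],
[0, 0, 0, 0, 0, 0, 0, 0, 0],
[0, 0, 0, 0, 0, 0, 0, 0, 0],
[0, 0, 0, 0, 0, 0, 0, 0, 0],
[0, 0, 0, 0, 0, 0, 0, 0, 0],
[0, 0, 0, 0, 0, 0, 0, 0, 0],
[0, 0, 0, 0, 0, 0, 0, 0, 0],
[0, 0, 0, 0, 0, 0, 0, 0, 0],
[0, 0, 0, 0, 0, 0, 0, 0, 0],
[0, 0, 0, 0, 0, 0, 0, 0, 0],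
[0, 0, 0, 0, 0, 0, 0, 0, 0],
[1, 1, 1, 1, 1, 1, 1, 1, 1],
[0, 0, 0, 0, 0, 0, 0, 0, 0],
[0, 0, 0, 0, 0, 0, 0, 0, 0],
[0, 0, 0, 0, 0, 0, 0, 0, 0],
[0, 0, 0, 0, 0, 0, 0, 0, 0],
[0, 0, 0, 0, 0, 0, 0, 0, 0],
[0, 0, 0, 0, 0, 0, 0, 0, 0],
[0, 0, 0, 0, 0, 0, 0, 0, 0],
[0, 0, 0, 0, 0, 0, 0, 0, 0],
[0, 0, 0, 0, 0, 0, 0, 0, 0],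
[0, 0, 0, 0, 0, 0, 0, 0, 0],
[0, 0, 0, 0, 0, 0, 0, 0, 0],
[0, 0, 0, 0, 0, 0, 0, 0, 0],
[0, 0, 0, 0, 0, 0, 0, 0, 0],
[0, 0, 0, 0, 0, 0, 0, 0, 0],
[0, 0, 0, 0, 0, 0, 0, 0, 0],
[0, 0, 0, 0, 0, 0, 0, 0, 0],
[0, 0, 0, 0, 0, 0, 0, 0, 0],
[0, 0, 0, 0, 0, 0, 0, 0, 0],
[0, 0, 0, 0, 0, 0, 0, 0, 0],
[0, 0, 0, 0, 0, 0, 0, 0, 0],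
[0, 0, 0, 0, 0, 0, 0, 0, 0],
[0, 0, 0, 0, 0, 0, 0, 0, 0],
[0, 0, 0, 0, 0, 0, 0, 0, 0],
[0, 0, 0, 0, 0, 0, 0, 0, 0],
[0, 0, 0, 0, 0, 0, 0, 0, 0],
[0, 0, 0, 0, 0, 0, 0, 0, 0],
[0, 0, 0, 0, 0, 0, 0, 0, 0],
[0, 0, 0, 0, 0, 0, 0, 0, 0],
[0, 0, 0, 0, 0, 0, 0, 0, 0],
[0, 0, 0, 0, 0, 0, 0, 0, 0],
[0, 0, 0, 0, 0, 0, 0, 0, 0]]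

def certD (k : ℕ) : ℤ := certDL.getD k 1

def certN (k i : ℕ) : ℤ := (certNL.getD k []).getD i 0

abbrev condC (k : ℕ) : Prop :=
  0 < certD k ∧
  certN k 0 ^ 2 + certN k 1 ^ 2 + certN k 2 ^ 2 + certN k 3 ^ 2 + certN k 4 ^ 2 + certN k 5 ^ 2 + certN k 6 ^ 2 + certN k 7 ^ 2 + certN k 8 ^ 2 ≤ certD k ^ 2 ∧
  certD k * ((epsZ k 0) - 2) ≤ certN k 0 ∧
  certD k * ((epsZ k 0 + epsZ k 1) - 2) ≤ certN k 0 + certN k 1 ∧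
  certD k * ((epsZ k 0 + epsZ k 1 + epsZ k 2) - 2) ≤ certN k 0 + certN k 1 + certN k 2 ∧
  certD k * ((epsZ k 0 + epsZ k 1 + epsZ k 2 + epsZ k 3) - 2) ≤ certN k 0 + certN k 1 + certN k 2 + certN k 3 ∧
  certD k * ((epsZ k 0 + epsZ k 1 + epsZ k 2 + epsZ k 3 + epsZ k 4) - 2) ≤ certN k 0 + certN k 1 + certN k 2 + certN k 3 + certN k 4 ∧
  certD k * ((epsZ k 0 + epsZ k 1 + epsZ k 2 + epsZ k 3 + epsZ k 4 + epsZ k 5) - 2) ≤ certN k 0 + certN k 1 + certN k 2 + certN k 3 + certN k 4 + certN k 5 ∧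
  certD k * ((epsZ k 0 + epsZ k 1 + epsZ k 2 + epsZ k 3 + epsZ k 4 + epsZ k 5 + epsZ k 6) - 2) ≤ certN k 0 + certN k 1 + certN k 2 + certN k 3 + certN k 4 + certN k 5 + certN k 6 ∧
  certD k * ((epsZ k 0 + epsZ k 1 + epsZ k 2 + epsZ k 3 + epsZ k 4 + epsZ k 5 + epsZ k 6 + epsZ k 7) - 2) ≤ certN k 0 + certN k 1 + certN k 2 + certN k 3 + certN k 4 + certN k 5 + certN k 6 + certN k 7 ∧
  certD k * ((epsZ k 0 + epsZ k 1 + epsZ k 2 + epsZ k 3 + epsZ k 4 + epsZ k 5 + epsZ k 6 + epsZ k 7 + epsZ k 8) - 2) ≤ certN k 0 + certN k 1 + certN k 2 + certN k 3 + certN k 4 + certN k 5 + certN k 6 + certN k 7 + certN k 8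


lemma stepA (d a0 a1 a2 a3 a4 a5 a6 a7 a8 e0 e1 e2 e3 e4 e5 e6 e7 e8 n0 n1 n2 n3 n4 n5 n6 n7 n8 : ℝ)
    (h01 : a1 ≤ a0) (h12 : a2 ≤ a1) (h23 : a3 ≤ a2) (h34 : a4 ≤ a3) (h45 : a5 ≤ a4)
    (h56 : a6 ≤ a5) (h67 : a7 ≤ a6) (h78 : a8 ≤ a7) (h8 : 0 ≤ a8)
    (q0 : d * (e0 - 2) ≤ n0)
    (q1 : d * (e0 + e1 - 2) ≤ n0 + n1)
    (q2 : d * (e0 + e1 + e2 - 2) ≤ n0 + n1 + n2)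
    (q3 : d * (e0 + e1 + e2 + e3 - 2) ≤ n0 + n1 + n2 + n3)
    (q4 : d * (e0 + e1 + e2 + e3 + e4 - 2) ≤ n0 + n1 + n2 + n3 + n4)
    (q5 : d * (e0 + e1 + e2 + e3 + e4 + e5 - 2) ≤ n0 + n1 + n2 + n3 + n4 + n5)
    (q6 : d * (e0 + e1 + e2 + e3 + e4 + e5 + e6 - 2) ≤ n0 + n1 + n2 + n3 + n4 + n5 + n6)
    (q7 : d * (e0 + e1 + e2 + e3 + e4 + e5 + e6 + e7 - 2) ≤ n0 + n1 + n2 + n3 + n4 + n5 + n6 + n7)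
    (q8 : d * (e0 + e1 + e2 + e3 + e4 + e5 + e6 + e7 + e8 - 2) ≤ n0 + n1 + n2 + n3 + n4 + n5 + n6 + n7 + n8) :
    d * ((e0 * a0 + e1 * a1 + e2 * a2 + e3 * a3 + e4 * a4 + e5 * a5 + e6 * a6 + e7 * a7 + e8 * a8)
      - 2 * a0) ≤ n0 * a0 + n1 * a1 + n2 * a2 + n3 * a3 + n4 * a4 + n5 * a5 + n6 * a6 + n7 * a7 + n8 * a8 := by
  linarith [mul_nonneg (by linarith : (0:ℝ) ≤ n0 - d * (e0 - 2)) (sub_nonneg.mpr h01),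
    mul_nonneg (by linarith : (0:ℝ) ≤ n0 + n1 - d * (e0 + e1 - 2)) (sub_nonneg.mpr h12),
    mul_nonneg (by linarith : (0:ℝ) ≤ n0 + n1 + n2 - d * (e0 + e1 + e2 - 2)) (sub_nonneg.mpr h23),
    mul_nonneg (by linarith : (0:ℝ) ≤ n0 + n1 + n2 + n3 - d * (e0 + e1 + e2 + e3 - 2)) (sub_nonneg.mpr h34),
    mul_nonneg (by linarith : (0:ℝ) ≤ n0 + n1 + n2 + n3 + n4 - d * (e0 + e1 + e2 + e3 + e4 - 2)) (sub_nonneg.mpr h45),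
    mul_nonneg (by linarith : (0:ℝ) ≤ n0 + n1 + n2 + n3 + n4 + n5 - d * (e0 + e1 + e2 + e3 + e4 + e5 - 2)) (sub_nonneg.mpr h56),
    mul_nonneg (by linarith : (0:ℝ) ≤ n0 + n1 + n2 + n3 + n4 + n5 + n6 - d * (e0 + e1 + e2 + e3 + e4 + e5 + e6 - 2)) (sub_nonneg.mpr h67),
    mul_nonneg (by linarith : (0:ℝ) ≤ n0 + n1 + n2 + n3 + n4 + n5 + n6 + n7 - d * (e0 + e1 + e2 + e3 + e4 + e5 + e6 + e7 - 2)) (sub_nonneg.mpr h78),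
    mul_nonneg (by linarith : (0:ℝ) ≤ n0 + n1 + n2 + n3 + n4 + n5 + n6 + n7 + n8 - d * (e0 + e1 + e2 + e3 + e4 + e5 + e6 + e7 + e8 - 2)) h8]

lemma cs9 (n0 n1 n2 n3 n4 n5 n6 n7 n8 d : ℝ) (a : Fin 9 → ℝ) (hd : 0 < d)
    (h : n0 ^ 2 + n1 ^ 2 + n2 ^ 2 + n3 ^ 2 + n4 ^ 2 + n5 ^ 2 + n6 ^ 2 + n7 ^ 2 + n8 ^ 2 ≤ d ^ 2) :
    n0 * a 0 + n1 * a 1 + n2 * a 2 + n3 * a 3 + n4 * a 4 + n5 * a 5 + n6 * a 6 + n7 * a 7 + n8 * a 8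
      ≤ d * Real.sqrt (∑ i, a i ^ 2) := by
  set n : Fin 9 → ℝ := ![n0, n1, n2, n3, n4, n5, n6, n7, n8] with hn
  have h2 := Finset.sum_mul_sq_le_sq_mul_sq Finset.univ n a
  rw [sum9 (fun i => n i * a i), sum9 (fun i => n i ^ 2)] at h2
  simp only [hn] at h2
  have ha2 : (0:ℝ) ≤ ∑ i, a i ^ 2 := Finset.sum_nonneg fun i _ => sq_nonneg _
  have h3 : (n0 * a 0 + n1 * a 1 + n2 * a 2 + n3 * a 3 + n4 * a 4 + n5 * a 5 + n6 * a 6 + n7 * a 7 + n8 * a 8) ^ 2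
      ≤ d ^ 2 * ∑ i, a i ^ 2 := by
    calc _ ≤ (n0 ^ 2 + n1 ^ 2 + n2 ^ 2 + n3 ^ 2 + n4 ^ 2 + n5 ^ 2 + n6 ^ 2 + n7 ^ 2 + n8 ^ 2) * ∑ i, a i ^ 2 := by
            simpa using h2
      _ ≤ d ^ 2 * ∑ i, a i ^ 2 := mul_le_mul_of_nonneg_right h ha2
  calc n0 * a 0 + n1 * a 1 + n2 * a 2 + n3 * a 3 + n4 * a 4 + n5 * a 5 + n6 * a 6 + n7 * a 7 + n8 * a 8
      ≤ |n0 * a 0 + n1 * a 1 + n2 * a 2 + n3 * a 3 + n4 * a 4 + n5 * a 5 + n6 * a 6 + n7 * a 7 + n8 * a 8| := le_abs_self _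
    _ = Real.sqrt ((n0 * a 0 + n1 * a 1 + n2 * a 2 + n3 * a 3 + n4 * a 4 + n5 * a 5 + n6 * a 6 + n7 * a 7 + n8 * a 8) ^ 2) := (Real.sqrt_sq_eq_abs _).symm
    _ ≤ Real.sqrt (d ^ 2 * ∑ i, a i ^ 2) := Real.sqrt_le_sqrt h3
    _ = d * Real.sqrt (∑ i, a i ^ 2) := by rw [Real.sqrt_mul (sq_nonneg d), Real.sqrt_sq hd.le]

lemma master (k : ℕ) (hk : condC k) (a : Fin 9 → ℝ) (ha : inQ a) :
    (∑ i, eps k i * a i) - 2 * a 0 ≤ Real.sqrt (∑ i, a i ^ 2) := by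
  obtain ⟨hd, hsq, q0, q1, q2, q3, q4, q5, q6, q7, q8⟩ := hk
  have hdR : (0:ℝ) < (certD k : ℝ) := by exact_mod_cast hd
  have he0 : eps k 0 = ((epsZ k 0 : ℤ) : ℝ) := by
    unfold eps epsZ; rw [show (((0:Fin 9)):ℕ) = 0 from rfl]; split <;> simp
  have he1 : eps k 1 = ((epsZ k 1 : ℤ) : ℝ) := by
    unfold eps epsZ; rw [show (((1:Fin 9)):ℕ) = 1 from rfl]; split <;> simp
  have he2 : eps k 2 = ((epsZ k 2 : ℤ) : ℝ) := by
    unfold eps epsZ; rw [show (((2:Fin 9)):ℕ) = 2 from rfl]; split <;> simp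
  have he3 : eps k 3 = ((epsZ k 3 : ℤ) : ℝ) := by
    unfold eps epsZ; rw [show (((3:Fin 9)):ℕ) = 3 from rfl]; split <;> simp
  have he4 : eps k 4 = ((epsZ k 4 : ℤ) : ℝ) := by
    unfold eps epsZ; rw [show (((4:Fin 9)):ℕ) = 4 from rfl]; split <;> simp
  have he5 : eps k 5 = ((epsZ k 5 : ℤ) : ℝ) := by
    unfold eps epsZ; rw [show (((5:Fin 9)):ℕ) = 5 from rfl]; split <;> simp
  have he6 : eps k 6 = ((epsZ k 6 : ℤ) : ℝ) := by
    unfold eps epsZ; rw [show (((6:Fin 9)):ℕ) = 6 from rfl]; split <;> simp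
  have he7 : eps k 7 = ((epsZ k 7 : ℤ) : ℝ) := by
    unfold eps epsZ; rw [show (((7:Fin 9)):ℕ) = 7 from rfl]; split <;> simp
  have he8 : eps k 8 = ((epsZ k 8 : ℤ) : ℝ) := by
    unfold eps epsZ; rw [show (((8:Fin 9)):ℕ) = 8 from rfl]; split <;> simp
  obtain ⟨hmono, hpos⟩ := ha
  have h01 : a 1 ≤ a 0 := hmono 0 1 (by decide)
  have h12 : a 2 ≤ a 1 := hmono 1 2 (by decide)
  have h23 : a 3 ≤ a 2 := hmono 2 3 (by decide)
  have h34 : a 4 ≤ a 3 := hmono 3 4 (by decide)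
  have h45 : a 5 ≤ a 4 := hmono 4 5 (by decide)
  have h56 : a 6 ≤ a 5 := hmono 5 6 (by decide)
  have h67 : a 7 ≤ a 6 := hmono 6 7 (by decide)
  have h78 : a 8 ≤ a 7 := hmono 7 8 (by decide)
  have h8 : 0 ≤ a 8 := hpos 8
  have hstep := stepA (certD k : ℝ) (a 0) (a 1) (a 2) (a 3) (a 4) (a 5) (a 6) (a 7) (a 8)
    (eps k 0) (eps k 1) (eps k 2) (eps k 3) (eps k 4) (eps k 5) (eps k 6) (eps k 7) (eps k 8)
    ((certN k 0 : ℝ)) ((certN k 1 : ℝ)) ((certN k 2 : ℝ)) ((certN k 3 : ℝ)) ((certN k 4 : ℝ))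
    ((certN k 5 : ℝ)) ((certN k 6 : ℝ)) ((certN k 7 : ℝ)) ((certN k 8 : ℝ))
    h01 h12 h23 h34 h45 h56 h67 h78 h8
    (by simp only [he0, he1, he2, he3, he4, he5, he6, he7, he8]; exact_mod_cast q0)
    (by simp only [he0, he1, he2, he3, he4, he5, he6, he7, he8]; exact_mod_cast q1)
    (by simp only [he0, he1, he2, he3, he4, he5, he6, he7, he8]; exact_mod_cast q2)
    (by simp only [he0, he1, he2, he3, he4, he5, he6, he7, he8]; exact_mod_cast q3)
    (by simp only [he0, he1, he2, he3, he4, he5, he6, he7, he8]; exact_mod_cast q4)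
    (by simp only [he0, he1, he2, he3, he4, he5, he6, he7, he8]; exact_mod_cast q5)
    (by simp only [he0, he1, he2, he3, he4, he5, he6, he7, he8]; exact_mod_cast q6)
    (by simp only [he0, he1, he2, he3, he4, he5, he6, he7, he8]; exact_mod_cast q7)
    (by simp only [he0, he1, he2, he3, he4, he5, he6, he7, he8]; exact_mod_cast q8)
  have hcs := cs9 ((certN k 0 : ℝ)) ((certN k 1 : ℝ)) ((certN k 2 : ℝ)) ((certN k 3 : ℝ))
    ((certN k 4 : ℝ)) ((certN k 5 : ℝ)) ((certN k 6 : ℝ)) ((certN k 7 : ℝ)) ((certN k 8 : ℝ))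
    (certD k : ℝ) a hdR (by exact_mod_cast hsq)
  have hfin : (certD k : ℝ) * ((eps k 0 * a 0 + eps k 1 * a 1 + eps k 2 * a 2 + eps k 3 * a 3
      + eps k 4 * a 4 + eps k 5 * a 5 + eps k 6 * a 6 + eps k 7 * a 7 + eps k 8 * a 8) - 2 * a 0)
      ≤ (certD k : ℝ) * Real.sqrt (∑ i, a i ^ 2) := le_trans hstep hcs
  have hfin2 := le_of_mul_le_mul_left hfin hdR
  rw [sum9 (fun i => eps k i * a i)]
  exact hfin2

lemma bitlemma : ∀ j ∈ Finset.Icc 128 255, ∀ p ∈ Finset.Iic 7,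
    Nat.testBit (255 - j) p = !Nat.testBit j p := by decide

def gset : Finset ℕ :=
  Finset.Icc 128 255 \
    (({128, 129, 130, 131, 188, 189, 190, 191, 220, 221, 222, 223, 231} : Finset ℕ)
      ∪ Finset.Icc 235 255)

set_option maxHeartbeats 8000000 in
lemma allGood : ∀ j ∈ gset, condC j ∧ condC (255 - j) := by decide

theorem stmt_4 (j : ℕ) (h1 : 128 ≤ j) (h2 : j ≤ 255)
    (hJ : j ∉ ({128, 129, 130, 131, 188, 189, 190, 191, 220, 221, 222, 223, 231} : Finset ℕ)
            ∪ Finset.Icc 235 255)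
    (a : Fin 9 → ℝ) (ha : inQ a) :
    min |∑ i, eps (255 - j) i * a i| |∑ i, eps j i * a i| ≤ Real.sqrt (∑ i, a i ^ 2) := by
  have hmem : j ∈ gset := Finset.mem_sdiff.mpr ⟨Finset.mem_Icc.mpr ⟨h1, h2⟩, hJ⟩
  obtain ⟨hcj, hcj'⟩ := allGood j hmem
  have hY := master j hcj a ha
  have hX := master (255 - j) hcj' a ha
  have ha0 : 0 ≤ a 0 := ha.2 0
  have hsum : (a 0) ^ 2 ≤ ∑ i, a i ^ 2 :=
    Finset.single_le_sum (f := fun i => a i ^ 2) (fun i _ => sq_nonneg _) (Finset.mem_univ 0)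
  have hsnn : (0:ℝ) ≤ ∑ i, a i ^ 2 := Finset.sum_nonneg fun i _ => sq_nonneg _
  have ha0R : a 0 ≤ Real.sqrt (∑ i, a i ^ 2) := (Real.le_sqrt ha0 hsnn).mpr hsum
  have hpt : ∀ i : Fin 9, eps (255 - j) i + eps j i = if i = 0 then 2 else 0 := by
    intro i
    by_cases hi : i = 0
    · subst hi
      have b1 : Nat.testBit j (8 - ((0 : Fin 9) : ℕ)) = false :=
        Nat.testBit_lt_two_pow (lt_of_le_of_lt h2 (by norm_num))
      have b2 : Nat.testBit (255 - j) (8 - ((0 : Fin 9) : ℕ)) = false :=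
        Nat.testBit_lt_two_pow (lt_of_le_of_lt (by omega : 255 - j ≤ 255) (by norm_num))
      rw [if_pos rfl]
      unfold eps
      rw [b1, b2]
      norm_num
    · have hne : (i : ℕ) ≠ 0 := fun h => hi (Fin.ext h)
      have hlt : (i : ℕ) < 9 := i.isLt
      have hb := bitlemma j (Finset.mem_Icc.mpr ⟨h1, h2⟩) (8 - (i : ℕ))
        (Finset.mem_Iic.mpr (by omega))
      rw [if_neg hi]
      unfold eps
      rw [hb]
      cases Nat.testBit j (8 - (i : ℕ)) <;> norm_num
  have f0 := hpt 0; rw [if_pos rfl] at f0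
  have f1 := hpt 1; rw [if_neg (by decide)] at f1
  have f2 := hpt 2; rw [if_neg (by decide)] at f2
  have f3 := hpt 3; rw [if_neg (by decide)] at f3
  have f4 := hpt 4; rw [if_neg (by decide)] at f4
  have f5 := hpt 5; rw [if_neg (by decide)] at f5
  have f6 := hpt 6; rw [if_neg (by decide)] at f6
  have f7 := hpt 7; rw [if_neg (by decide)] at f7
  have f8 := hpt 8; rw [if_neg (by decide)] at f8
  have g0 : eps (255 - j) 0 * a 0 + eps j 0 * a 0 = 2 * a 0 := by rw [← add_mul, f0]
  have g1 : eps (255 - j) 1 * a 1 + eps j 1 * a 1 = 0 := by rw [← add_mul, f1, zero_mul]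
  have g2 : eps (255 - j) 2 * a 2 + eps j 2 * a 2 = 0 := by rw [← add_mul, f2, zero_mul]
  have g3 : eps (255 - j) 3 * a 3 + eps j 3 * a 3 = 0 := by rw [← add_mul, f3, zero_mul]
  have g4 : eps (255 - j) 4 * a 4 + eps j 4 * a 4 = 0 := by rw [← add_mul, f4, zero_mul]
  have g5 : eps (255 - j) 5 * a 5 + eps j 5 * a 5 = 0 := by rw [← add_mul, f5, zero_mul]
  have g6 : eps (255 - j) 6 * a 6 + eps j 6 * a 6 = 0 := by rw [← add_mul, f6, zero_mul]
  have g7 : eps (255 - j) 7 * a 7 + eps j 7 * a 7 = 0 := by rw [← add_mul, f7, zero_mul]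
  have g8 : eps (255 - j) 8 * a 8 + eps j 8 * a 8 = 0 := by rw [← add_mul, f8, zero_mul]
  have hid : (∑ i, eps (255 - j) i * a i) + (∑ i, eps j i * a i) = 2 * a 0 := by
    rw [sum9 (fun i => eps (255 - j) i * a i), sum9 (fun i => eps j i * a i)]
    linarith [g0, g1, g2, g3, g4, g5, g6, g7, g8]
  rcases le_total (∑ i, eps (255 - j) i * a i) (∑ i, eps j i * a i) with hc | hc
  · exact le_trans (min_le_left _ _) (abs_le.mpr ⟨by linarith, by linarith⟩)
  · exact le_trans (min_le_right _ _) (abs_le.mpr ⟨by linarith, by linarith⟩)
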